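/- Let 0 < l ≤ 4/3 and R > 0. In ℝ², let D be the open triangle with vertices (−R/2, l/2), (R/2, l/2), and (0, 0), and let B̂ = ℝ × (−l/2, 0). Then G(D, B̂) := ∫_{D × B̂} |y−x|^{−3} d(x,y) ≤ 2·ω₁·(R − 2R ln(l/2)), where ω₁ = 2. -/

import Mathlib

open MeasureTheory Set
open scoped ENNReal

theorem ioiInt (t c : ℝ) (ht : 0 < t) (hc : 0 ≤ c) :
    (∫⁻ s in Ioi t, ENNReal.ofReal (c / s ^ 2)) = ENNReal.ofReal (c / t) := by
  have h1 : ∀ s ∈ Ioi t, ENNReal.ofReal (c / s ^ 2) = ENNReal.ofReal (c * s ^ (-2 : ℝ)) := by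
    intro s hs
    rw [Real.rpow_neg (le_of_lt (ht.trans hs)), Real.rpow_two]
    rw [div_eq_mul_inv]
  rw [setLIntegral_congr_fun measurableSet_Ioi h1]
  have hint : IntegrableOn (fun s : ℝ => c * s ^ (-2 : ℝ)) (Ioi t) := by
    exact (integrableOn_Ioi_rpow_of_lt (by norm_num) ht).const_mul c
  rw [← ofReal_integral_eq_lintegral_ofReal hint]
  · rw [MeasureTheory.integral_const_mul, integral_Ioi_rpow_of_lt (by norm_num) ht]
    norm_num
    rw [Real.rpow_neg_one]
    rw [div_eq_mul_inv]
  · filter_upwards [self_mem_ae_restrict measurableSet_Ioi] with s hs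
    exact mul_nonneg hc (Real.rpow_nonneg (le_of_lt (ht.trans hs)) _)

theorem ioi3 (t : ℝ) (ht : 0 < t) :
    (∫⁻ s in Ioi t, ENNReal.ofReal (1 / s ^ 3)) = ENNReal.ofReal (1 / (2 * t ^ 2)) := by
  have h1 : ∀ s ∈ Ioi t, ENNReal.ofReal (1 / s ^ 3) = ENNReal.ofReal (s ^ (-3 : ℝ)) := by
    intro s hs
    rw [Real.rpow_neg (le_of_lt (ht.trans hs)), show (3:ℝ) = (3:ℕ) by norm_num,
      Real.rpow_natCast, one_div]
  rw [setLIntegral_congr_fun measurableSet_Ioi h1]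
  rw [← ofReal_integral_eq_lintegral_ofReal (integrableOn_Ioi_rpow_of_lt (by norm_num) ht)]
  · rw [integral_Ioi_rpow_of_lt (by norm_num) ht]
    have h2 : t ^ ((-3:ℝ)+1) = (t^2)⁻¹ := by
      rw [show (-3:ℝ)+1 = (-2:ℝ) by norm_num, Real.rpow_neg ht.le,
        show (2:ℝ) = ((2:ℕ):ℝ) by norm_num, Real.rpow_natCast]
    rw [h2]
    congr 1
    field_simp
    ring
  · filter_upwards [self_mem_ae_restrict measurableSet_Ioi] with s hs
    exact Real.rpow_nonneg (le_of_lt (ht.trans hs)) _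

theorem lemH (t : ℝ) (ht : 0 < t) :
    (∫⁻ a : ℝ, ENNReal.ofReal (1 / max (t ^ 3) (|a| ^ 3))) ≤ ENNReal.ofReal (3 / t ^ 2) := by
  have h3 : (0:ℝ) < t ^ 3 := by positivity
  rw [← lintegral_add_compl _ (measurableSet_Icc (a := -t) (b := t))]
  have hIcc : (∫⁻ a in Icc (-t) t, ENNReal.ofReal (1 / max (t ^ 3) (|a| ^ 3)))
      ≤ ENNReal.ofReal (2 / t ^ 2) := by
    calc (∫⁻ a in Icc (-t) t, ENNReal.ofReal (1 / max (t ^ 3) (|a| ^ 3)))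
        ≤ ∫⁻ _ in Icc (-t) t, ENNReal.ofReal (1 / t ^ 3) := by
          refine setLIntegral_mono measurable_const fun a _ => ?_
          exact ENNReal.ofReal_le_ofReal
            (one_div_le_one_div_of_le h3 (le_max_left _ _))
      _ = ENNReal.ofReal (1 / t ^ 3) * volume (Icc (-t) t) := setLIntegral_const _ _
      _ = ENNReal.ofReal (2 / t ^ 2) := by
          rw [Real.volume_Icc, ← ENNReal.ofReal_mul (by positivity)]
          congr 1
          field_simp
          ring
  have hout : (∫⁻ a in (Icc (-t) t)ᶜ, ENNReal.ofReal (1 / max (t ^ 3) (|a| ^ 3)))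
      ≤ ENNReal.ofReal (1 / t ^ 2) := by
    have hsub : (Icc (-t) t)ᶜ = Iio (-t) ∪ Ioi t := by
      ext a
      simp only [mem_compl_iff, mem_Icc, not_and_or, not_le, mem_union, mem_Iio, mem_Ioi]
    rw [hsub]
    calc (∫⁻ a in Iio (-t) ∪ Ioi t, ENNReal.ofReal (1 / max (t ^ 3) (|a| ^ 3)))
        ≤ (∫⁻ a in Iio (-t), ENNReal.ofReal (1 / max (t ^ 3) (|a| ^ 3)))
          + ∫⁻ a in Ioi t, ENNReal.ofReal (1 / max (t ^ 3) (|a| ^ 3)) :=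
          lintegral_union_le _ _ _
      _ ≤ ENNReal.ofReal (1 / (2 * t ^ 2)) + ENNReal.ofReal (1 / (2 * t ^ 2)) := by
          gcongr
          · -- Iio (-t)
            have hneg : (∫⁻ a in Iio (-t), ENNReal.ofReal (1 / max (t ^ 3) (|a| ^ 3)))
                = ∫⁻ a in Ioi t, ENNReal.ofReal (1 / max (t ^ 3) (|(-a)| ^ 3)) := by
              rw [← (Measure.measurePreserving_neg (volume : Measure ℝ)).setLIntegral_comp_preimage_emb
                (MeasurableEquiv.neg ℝ).measurableEmbedding]
              congr 1
              ext a; simp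
            rw [hneg]
            calc (∫⁻ a in Ioi t, ENNReal.ofReal (1 / max (t ^ 3) (|(-a)| ^ 3)))
                ≤ ∫⁻ a in Ioi t, ENNReal.ofReal (1 / a ^ 3) := by
                  refine setLIntegral_mono (by fun_prop) fun a ha => ?_
                  refine ENNReal.ofReal_le_ofReal (one_div_le_one_div_of_le (by have := ht.trans ha; positivity) ?_)
                  rw [abs_neg, abs_of_pos (ht.trans ha)]
                  exact le_max_right _ _
              _ = ENNReal.ofReal (1 / (2 * t ^ 2)) := ioi3 t ht
          · calc (∫⁻ a in Ioi t, ENNReal.ofReal (1 / max (t ^ 3) (|a| ^ 3)))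
                ≤ ∫⁻ a in Ioi t, ENNReal.ofReal (1 / a ^ 3) := by
                  refine setLIntegral_mono (by fun_prop) fun a ha => ?_
                  refine ENNReal.ofReal_le_ofReal (one_div_le_one_div_of_le (by have := ht.trans ha; positivity) ?_)
                  rw [abs_of_pos (ht.trans ha)]
                  exact le_max_right _ _
              _ = ENNReal.ofReal (1 / (2 * t ^ 2)) := ioi3 t ht
      _ = ENNReal.ofReal (1 / t ^ 2) := by
          rw [← ENNReal.ofReal_add (by positivity) (by positivity)]
          congr 1; field_simp; ring
  calc _ ≤ ENNReal.ofReal (2 / t ^ 2) + ENNReal.ofReal (1 / t ^ 2) := add_le_add hIcc hout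
    _ = ENNReal.ofReal (3 / t ^ 2) := by
        rw [← ENNReal.ofReal_add (by positivity) (by positivity)]
        congr 1; field_simp; ring


theorem lemInner (l x0 t : ℝ) (ht : 0 < t) :
    (∫⁻ p in (univ ×ˢ Ioo (-l/2) 0 : Set (ℝ × ℝ)),
      ENNReal.ofReal (1 / max ((t - p.2) ^ 3) (|p.1 - x0| ^ 3))) ≤ ENNReal.ofReal (3 / t) := by
  have hmeas : Measurable fun p : ℝ × ℝ =>
      ENNReal.ofReal (1 / max ((t - p.2) ^ 3) (|p.1 - x0| ^ 3)) := by fun_prop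
  rw [Measure.volume_eq_prod, ← Measure.prod_restrict, Measure.restrict_univ,
    lintegral_prod_symm _ hmeas.aemeasurable]
  calc (∫⁻ b in Ioo (-l/2) 0, ∫⁻ a : ℝ,
          ENNReal.ofReal (1 / max ((t - b) ^ 3) (|a - x0| ^ 3)))
      ≤ ∫⁻ b in Ioo (-l/2) 0, ENNReal.ofReal (3 / (t - b) ^ 2) := by
        refine setLIntegral_mono (by fun_prop) fun b hb => ?_
        have htb : 0 < t - b := by have := hb.2; linarith
        calc (∫⁻ a : ℝ, ENNReal.ofReal (1 / max ((t - b) ^ 3) (|a - x0| ^ 3)))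
            = ∫⁻ a : ℝ, ENNReal.ofReal (1 / max ((t - b) ^ 3) (|a| ^ 3)) :=
              lintegral_sub_right_eq_self
                (fun a => ENNReal.ofReal (1 / max ((t - b) ^ 3) (|a| ^ 3))) x0
          _ ≤ ENNReal.ofReal (3 / (t - b) ^ 2) := lemH _ htb
    _ ≤ ∫⁻ b in Iio 0, ENNReal.ofReal (3 / (t - b) ^ 2) :=
        lintegral_mono_set (fun b hb => hb.2)
    _ = ∫⁻ s in Ioi t, ENNReal.ofReal (3 / s ^ 2) := by
        have hemb : MeasurableEmbedding (fun b : ℝ => t - b) :=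
          (MeasurableEquiv.subLeft t).measurableEmbedding
        have hmp : MeasurePreserving (fun b : ℝ => t - b) volume volume :=
          Measure.measurePreserving_sub_left volume t
        rw [← hmp.setLIntegral_comp_preimage_emb hemb
          (fun s => ENNReal.ofReal (3 / s ^ 2)) (Ioi t)]
        congr 1
        ext b
        simp [sub_pos, lt_iff_lt_of_le_iff_le]
    _ = ENNReal.ofReal (3 / t) := ioiInt t 3 ht (by norm_num)

theorem lemOuter (l R : ℝ) (hl : 0 < l) (hR : 0 < R) :
    (∫⁻ p in {p : ℝ × ℝ | 0 < p.2 ∧ p.2 < l / 2 ∧ |p.1| < (R / l) * p.2},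
      ENNReal.ofReal (3 / p.2)) ≤ ENNReal.ofReal (3 * R) := by
  have hDm : MeasurableSet {p : ℝ × ℝ | 0 < p.2 ∧ p.2 < l / 2 ∧ |p.1| < (R / l) * p.2} := by
    apply MeasurableSet.inter
    · exact measurableSet_lt measurable_const measurable_snd
    apply MeasurableSet.inter
    · exact measurableSet_lt measurable_snd measurable_const
    · exact measurableSet_lt (measurable_fst.abs) (measurable_snd.const_mul _)
  rw [← lintegral_indicator hDm, Measure.volume_eq_prod,
    lintegral_prod_symm _ (((measurable_snd.const_div 3).ennreal_ofReal).indicator hDm).aemeasurable]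
  calc (∫⁻ b : ℝ, ∫⁻ a : ℝ, ({p : ℝ × ℝ | 0 < p.2 ∧ p.2 < l / 2 ∧ |p.1| < (R / l) * p.2}).indicator
          (fun p => ENNReal.ofReal (3 / p.2)) (a, b))
      ≤ ∫⁻ b : ℝ, (Ioo (0:ℝ) (l / 2)).indicator (fun _ => ENNReal.ofReal (6 * R / l)) b := by
        refine lintegral_mono fun b => ?_
        by_cases hb : b ∈ Ioo (0:ℝ) (l / 2)
        · have heq : ∀ a : ℝ, ({p : ℝ × ℝ | 0 < p.2 ∧ p.2 < l / 2 ∧ |p.1| < (R / l) * p.2}).indicator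
              (fun p => ENNReal.ofReal (3 / p.2)) (a, b)
              = (Ioo (-((R / l) * b)) ((R / l) * b)).indicator
                  (fun _ => ENNReal.ofReal (3 / b)) a := by
            intro a
            by_cases h : |a| < (R / l) * b
            · rw [indicator_of_mem (by exact ⟨hb.1, hb.2, h⟩),
                indicator_of_mem (by rw [mem_Ioo, ← abs_lt]; exact h)]
            · rw [indicator_of_notMem (by
                  intro hmem
                  exact h hmem.2.2),
                indicator_of_notMem (by rw [mem_Ioo, ← abs_lt]; exact h)]
          rw [indicator_of_mem hb]
          refine le_of_eq ?_
          rw [lintegral_congr heq, lintegral_indicator measurableSet_Ioo, setLIntegral_const,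
            Real.volume_Ioo, ← ENNReal.ofReal_mul (by have := hb.1; positivity)]
          congr 1
          have hb0 : b ≠ 0 := ne_of_gt hb.1
          field_simp
          ring
        · rw [indicator_of_notMem hb]
          have : ∀ a : ℝ, ({p : ℝ × ℝ | 0 < p.2 ∧ p.2 < l / 2 ∧ |p.1| < (R / l) * p.2}).indicator
              (fun p => ENNReal.ofReal (3 / p.2)) (a, b) = 0 := by
            intro a
            apply indicator_of_notMem
            intro hmem
            exact hb ⟨hmem.1, hmem.2.1⟩
          simp [this]
    _ = ENNReal.ofReal (3 * R) := by
        rw [lintegral_indicator measurableSet_Ioo, setLIntegral_const, Real.volume_Ioo,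
          ← ENNReal.ofReal_mul (by positivity)]
        congr 1
        have hl0 : l ≠ 0 := ne_of_gt hl
        field_simp
        ring

theorem coordLe (v : EuclideanSpace ℝ (Fin 2)) (i : Fin 2) : |v i| ≤ ‖v‖ := by
  rw [EuclideanSpace.norm_eq, Fin.sum_univ_two, ← Real.sqrt_sq (abs_nonneg (v i))]
  apply Real.sqrt_le_sqrt
  fin_cases i <;> simp [sq_abs] <;> nlinarith [sq_nonneg (v 0), sq_nonneg (v 1), sq_abs (v 0), sq_abs (v 1)]


/-- Estimate of `G` for the open triangle `D` with vertices `(−R/2, l/2)`, `(R/2, l/2)`,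
`(0,0)` against the fattened line `B̂ = ℝ × (−l/2, 0)`:
`G(D, B̂) ≤ 2 ω₁ (R − 2R ln(l/2))` with `ω₁ = 2`. -/
theorem stmt_5 (l R : ℝ) (hl : 0 < l) (hl' : l ≤ 4 / 3) (hR : 0 < R)
    (D Bhat : Set (EuclideanSpace ℝ (Fin 2)))
    (hD : D = {p | 0 < p 1 ∧ p 1 < l / 2 ∧ |p 0| < (R / l) * p 1})
    (hB : Bhat = {p | p 1 ∈ Set.Ioo (-l / 2) 0}) :
    (∫⁻ x in D, ∫⁻ y in Bhat, ENNReal.ofReal (1 / ‖y - x‖ ^ 3)) ≤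
      ENNReal.ofReal (2 * 2 * (R - 2 * R * Real.log (l / 2))) := by
  set e : EuclideanSpace ℝ (Fin 2) ≃ᵐ ℝ × ℝ :=
    (MeasurableEquiv.toLp 2 (Fin 2 → ℝ)).symm.trans (MeasurableEquiv.piFinTwo fun _ => ℝ) with he
  have hmp : MeasurePreserving e volume volume :=
    (EuclideanSpace.volume_preserving_symm_measurableEquiv_toLp (Fin 2)).trans
      (volume_preserving_piFinTwo fun _ => ℝ)
  have heapp : ∀ v : EuclideanSpace ℝ (Fin 2), e v = (v 0, v 1) := fun v => rfl
  -- inner bound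
  have key : ∀ x ∈ D, (∫⁻ y in Bhat, ENNReal.ofReal (1 / ‖y - x‖ ^ 3))
      ≤ ENNReal.ofReal (3 / x 1) := by
    intro x hx
    rw [hD] at hx
    obtain ⟨hx1, hx2, hx3⟩ := hx
    have hBpre : Bhat = e ⁻¹' ((univ ×ˢ Ioo (-l/2) 0 : Set (ℝ × ℝ))) := by
      rw [hB]; ext y; simp [heapp]
    calc (∫⁻ y in Bhat, ENNReal.ofReal (1 / ‖y - x‖ ^ 3))
        ≤ ∫⁻ y in Bhat, ENNReal.ofReal (1 / max ((x 1 - y 1) ^ 3) (|y 0 - x 0| ^ 3)) := by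
          refine setLIntegral_mono (by fun_prop) fun y hy => ?_
          rw [hB] at hy
          have hy1 : y 1 < 0 := hy.2
          have hgap : 0 < x 1 - y 1 := by linarith
          refine ENNReal.ofReal_le_ofReal (one_div_le_one_div_of_le (by positivity) ?_)
          have h0 : |y 0 - x 0| ≤ ‖y - x‖ := by
            have := coordLe (y - x) 0
            simpa using this
          have h1 : x 1 - y 1 ≤ ‖y - x‖ := by
            have := coordLe (y - x) 1
            rw [show (y - x) 1 = y 1 - x 1 by simp] at this
            calc x 1 - y 1 ≤ |y 1 - x 1| := by rw [abs_sub_comm]; exact le_abs_self _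
              _ ≤ ‖y - x‖ := this
          refine max_le ?_ ?_
          · exact pow_le_pow_left₀ hgap.le h1 3
          · exact pow_le_pow_left₀ (abs_nonneg _) h0 3
      _ = ∫⁻ p in (univ ×ˢ Ioo (-l/2) 0 : Set (ℝ × ℝ)),
            ENNReal.ofReal (1 / max ((x 1 - p.2) ^ 3) (|p.1 - x 0| ^ 3)) := by
          rw [hBpre]
          exact hmp.setLIntegral_comp_preimage_emb e.measurableEmbedding
            (fun p => ENNReal.ofReal (1 / max ((x 1 - p.2) ^ 3) (|p.1 - x 0| ^ 3))) _
      _ ≤ ENNReal.ofReal (3 / x 1) := lemInner l (x 0) (x 1) hx1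
  -- assemble
  have hDpre : D = e ⁻¹' {p : ℝ × ℝ | 0 < p.2 ∧ p.2 < l / 2 ∧ |p.1| < (R / l) * p.2} := by
    rw [hD]; ext x; simp [heapp]
  calc (∫⁻ x in D, ∫⁻ y in Bhat, ENNReal.ofReal (1 / ‖y - x‖ ^ 3))
      ≤ ∫⁻ x in D, ENNReal.ofReal (3 / x 1) := setLIntegral_mono (by fun_prop) key
    _ = ∫⁻ p in {p : ℝ × ℝ | 0 < p.2 ∧ p.2 < l / 2 ∧ |p.1| < (R / l) * p.2},
          ENNReal.ofReal (3 / p.2) := by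
        rw [hDpre]
        exact hmp.setLIntegral_comp_preimage_emb e.measurableEmbedding
          (fun p => ENNReal.ofReal (3 / p.2)) _
    _ ≤ ENNReal.ofReal (3 * R) := lemOuter l R hl hR
    _ ≤ ENNReal.ofReal (2 * 2 * (R - 2 * R * Real.log (l / 2))) := by
        apply ENNReal.ofReal_le_ofReal
        have hlog : Real.log (l / 2) ≤ 0 := Real.log_nonpos (by linarith) (by linarith)
        nlinarith [mul_nonneg hR.le (neg_nonneg.mpr hlog)]
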